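/- Let α ∈ T_n be an idempotent and let ε be an idempotent of the variant (T_n, *_α) (i.e., εαε = ε). The maximal subgroup of (T_n, *_α) with identity ε consists exactly of those β ∈ T_n with the same kernel partition and the same image as ε, and this group is isomorphic to the symmetric group on im(ε). -/

import Mathlib

/-- The sandwich multiplication `β *_α γ = βαγ` on `T_n` (left-to-right composition). -/
def vmul {n : ℕ} (α β γ : Fin n → Fin n) : Fin n → Fin n :=
  fun x => γ (α (β x))

/-- `vpow α β m = β^{*(m+1)}`, the positive `*_α`-powers of `β`. -/
def vpow {n : ℕ} (α β : Fin n → Fin n) : ℕ → (Fin n → Fin n)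
  | 0 => β
  | m + 1 => vmul α (vpow α β m) β

lemma vpow_eq_iterate {n : ℕ} (α β : Fin n → Fin n) (m : ℕ) (x : Fin n) :
    vpow α β m x = (fun z => β (α z))^[m] (β x) := by
  induction m with
  | zero => rfl
  | succ k ih =>
    rw [Function.iterate_succ']
    simp only [Function.comp_apply]
    rw [← ih]
    rfl

lemma iterate_mem_range {n : ℕ} (α β : Fin n → Fin n) (m : ℕ) (x : Fin n) :
    ∃ w, (fun z => β (α z))^[m] (β x) = β w := by
  induction m with
  | zero => exact ⟨x, rfl⟩
  | succ k ih =>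
    obtain ⟨w, hw⟩ := ih
    rw [Function.iterate_succ']
    exact ⟨α (β w), by simp [hw]⟩

/-- The maximal subgroup `G(ε) = {β ∈ √ε : ε*β = β*ε = β}` of `(T_n, *_α)` at an
idempotent `ε` consists exactly of the `β` with the same kernel and image as `ε`,
and it is isomorphic to the symmetric group on `im(ε)`. -/
theorem maximal_subgroup_description {n : ℕ} (α ε : Fin n → Fin n)
    (hα : ∀ x, α (α x) = α x) (hε : vmul α ε ε = ε) :
    (∀ β : Fin n → Fin n,
      ((∃ m : ℕ, vpow α β m = ε) ∧ vmul α ε β = β ∧ vmul α β ε = β) ↔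
        ((∀ x y, β x = β y ↔ ε x = ε y) ∧ Set.range β = Set.range ε)) ∧
    (∃ Φ : (Fin n → Fin n) → (Set.range ε → Set.range ε),
      (∀ β ∈ {β | (∃ m : ℕ, vpow α β m = ε) ∧ vmul α ε β = β ∧ vmul α β ε = β},
        Function.Bijective (Φ β)) ∧
      (Set.InjOn Φ {β | (∃ m : ℕ, vpow α β m = ε) ∧ vmul α ε β = β ∧ vmul α β ε = β}) ∧
      (∀ π : Equiv.Perm (Set.range ε),
        ∃ β ∈ {β | (∃ m : ℕ, vpow α β m = ε) ∧ vmul α ε β = β ∧ vmul α β ε = β},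
          Φ β = ⇑π) ∧
      (∀ β ∈ {β | (∃ m : ℕ, vpow α β m = ε) ∧ vmul α ε β = β ∧ vmul α β ε = β},
        ∀ γ ∈ {β | (∃ m : ℕ, vpow α β m = ε) ∧ vmul α ε β = β ∧ vmul α β ε = β},
          Φ (vmul α β γ) = Φ γ ∘ Φ β)) := by
  have hεε : ∀ x, ε (α (ε x)) = ε x := fun x => congrFun hε x
  -- for y in the range of ε, ε (α y) = y
  have hfix : ∀ y ∈ Set.range ε, ε (α y) = y := by
    rintro y ⟨z, rfl⟩
    exact hεε z
  -- the main characterization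
  have key : ∀ β : Fin n → Fin n,
      ((∃ m : ℕ, vpow α β m = ε) ∧ vmul α ε β = β ∧ vmul α β ε = β) ↔
        ((∀ x y, β x = β y ↔ ε x = ε y) ∧ Set.range β = Set.range ε) := by
    intro β
    constructor
    · rintro ⟨⟨m, hm⟩, heb, hbe⟩
      have heb' : ∀ x, β (α (ε x)) = β x := fun x => congrFun heb x
      have hbe' : ∀ x, ε (α (β x)) = β x := fun x => congrFun hbe x
      have hεfromβ : ∀ x, ε x = (fun z => β (α z))^[m] (β x) := by
        intro x
        rw [← hm, vpow_eq_iterate]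
      constructor
      · intro x y
        constructor
        · intro h
          rw [hεfromβ x, hεfromβ y, h]
        · intro h
          rw [← heb' x, ← heb' y, h]
      · apply Set.eq_of_subset_of_subset
        · rintro _ ⟨x, rfl⟩
          exact ⟨α (β x), hbe' x⟩
        · rintro _ ⟨x, rfl⟩
          obtain ⟨w, hw⟩ := iterate_mem_range α β m x
          exact ⟨w, by rw [hεfromβ x, hw]⟩
    · rintro ⟨hk, hr⟩
      have heb' : ∀ x, β (α (ε x)) = β x := by
        intro x
        exact (hk (α (ε x)) x).mpr (hεε x)
      have hbe' : ∀ x, ε (α (β x)) = β x := by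
        intro x
        have hm : β x ∈ Set.range ε := by rw [← hr]; exact ⟨x, rfl⟩
        exact hfix (β x) hm
      refine ⟨?_, funext heb', funext hbe'⟩
      -- build the permutation g on range ε induced by β
      have hmem : ∀ y : Set.range ε, β (α (y : Fin n)) ∈ Set.range ε := by
        intro y; exact hr.subset ⟨α (y : Fin n), rfl⟩
      set g : Set.range ε → Set.range ε := fun y => ⟨β (α (y : Fin n)), hmem y⟩ with hg
      have hginj : Function.Injective g := by
        intro y₁ y₂ h
        have h1 : β (α (y₁ : Fin n)) = β (α (y₂ : Fin n)) := congrArg Subtype.val h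
        have h2 : ε (α (y₁ : Fin n)) = ε (α (y₂ : Fin n)) := (hk _ _).mp h1
        have := hfix _ y₁.2
        have := hfix _ y₂.2
        exact Subtype.ext (by rw [← hfix _ y₁.2, ← hfix _ y₂.2, h2])
      have hgbij : Function.Bijective g := Finite.injective_iff_bijective.mp hginj
      set e : Equiv.Perm (Set.range ε) := Equiv.ofBijective g hgbij with he
      have hcoe : ∀ y, e y = g y := fun y => rfl
      have hk0 : orderOf e ≠ 0 := (orderOf_pos e).ne'
      obtain ⟨k, hkk⟩ : ∃ k, orderOf e = k + 1 := ⟨orderOf e - 1, by omega⟩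
      have hek : e ^ (k + 1) = 1 := by rw [← hkk]; exact pow_orderOf_eq_one e
      -- iterates of f on range-ε elements agree with iterates of g
      have hiter : ∀ (j : ℕ) (y : Set.range ε),
          (fun z => β (α z))^[j] (y : Fin n) = ((g^[j] y : Set.range ε) : Fin n) := by
        intro j
        induction j with
        | zero => intro y; rfl
        | succ i ih =>
          intro y
          rw [Function.iterate_succ', Function.iterate_succ']
          simp only [Function.comp_apply, ih y]
          rfl
      refine ⟨k, funext fun x => ?_⟩
      rw [vpow_eq_iterate]
      have hβx : β x = ((g ⟨ε x, Set.mem_range_self x⟩ : Set.range ε) : Fin n) := by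
        simp only [hg]
        rw [heb' x]
      rw [hβx, hiter k]
      have : g^[k] (g ⟨ε x, Set.mem_range_self x⟩) = g^[k + 1] ⟨ε x, Set.mem_range_self x⟩ := by
        rw [Function.iterate_succ_apply]
      rw [this]
      have hgk : g^[k + 1] = ⇑(e ^ (k + 1)) := by
        rw [Equiv.Perm.coe_pow]
        rfl
      rw [hgk, hek]
      rfl
  refine ⟨key, ?_⟩
  -- the isomorphism with the symmetric group
  set Φ : (Fin n → Fin n) → (Set.range ε → Set.range ε) :=
    fun β y => ⟨ε (α (β (α (y : Fin n)))), Set.mem_range_self _⟩ with hΦ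
  set S : Set (Fin n → Fin n) :=
    {β | (∃ m : ℕ, vpow α β m = ε) ∧ vmul α ε β = β ∧ vmul α β ε = β} with hS
  have hΦval : ∀ β ∈ S, ∀ y : Set.range ε, (Φ β y : Fin n) = β (α (y : Fin n)) := by
    intro β hβ y
    have hbe' : ∀ x, ε (α (β x)) = β x := fun x => congrFun hβ.2.2 x
    exact hbe' _
  refine ⟨Φ, ?_, ?_, ?_, ?_⟩
  · -- bijectivity
    intro β hβ
    obtain ⟨hk, hr⟩ := (key β).mp hβ
    apply Finite.injective_iff_bijective.mp
    intro y₁ y₂ h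
    have h1 : β (α (y₁ : Fin n)) = β (α (y₂ : Fin n)) := by
      rw [← hΦval β hβ y₁, ← hΦval β hβ y₂, h]
    have h2 : ε (α (y₁ : Fin n)) = ε (α (y₂ : Fin n)) := (hk _ _).mp h1
    exact Subtype.ext (by rw [← hfix _ y₁.2, ← hfix _ y₂.2, h2])
  · -- injectivity of Φ on S
    intro β hβ γ hγ h
    have heb' : ∀ x, β (α (ε x)) = β x := fun x => congrFun hβ.2.1 x
    have heg' : ∀ x, γ (α (ε x)) = γ x := fun x => congrFun hγ.2.1 x
    funext x
    have := congrFun h ⟨ε x, Set.mem_range_self x⟩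
    have h1 : (Φ β ⟨ε x, Set.mem_range_self x⟩ : Fin n)
        = (Φ γ ⟨ε x, Set.mem_range_self x⟩ : Fin n) := by rw [this]
    rw [hΦval β hβ, hΦval γ hγ] at h1
    simp only at h1
    rw [heb', heg'] at h1
    exact h1
  · -- surjectivity onto permutations
    intro π
    set β : Fin n → Fin n := fun x => ((π ⟨ε x, Set.mem_range_self x⟩ : Set.range ε) : Fin n)
      with hβdef
    have hβmem : β ∈ S := by
      apply (key β).mpr
      constructor
      · intro x y
        constructor
        · intro h
          have h2 := π.injective (Subtype.ext h)
          exact congrArg Subtype.val h2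
        · intro h
          exact congrArg (fun t => ((π t : Set.range ε) : Fin n)) (Subtype.ext h)
      · apply Set.eq_of_subset_of_subset
        · rintro _ ⟨x, rfl⟩
          exact (π ⟨ε x, Set.mem_range_self x⟩).2
        · rintro _ ⟨x, rfl⟩
          obtain ⟨y, hy⟩ := π.surjective ⟨ε x, Set.mem_range_self x⟩
          obtain ⟨z, hz⟩ := y.2
          refine ⟨z, ?_⟩
          have : (⟨ε z, Set.mem_range_self z⟩ : Set.range ε) = y := Subtype.ext hz
          simp only [hβdef, this, hy]
      
    refine ⟨β, hβmem, ?_⟩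
    funext y
    apply Subtype.ext
    rw [hΦval β hβmem y]
    have h1 : (⟨ε (α (y : Fin n)), Set.mem_range_self _⟩ : Set.range ε) = y :=
      Subtype.ext (hfix _ y.2)
    have h2 : β (α (y : Fin n)) = ((π y : Set.range ε) : Fin n) := by
      simp only [hβdef]
      exact congrArg (fun t => ((π t : Set.range ε) : Fin n)) h1
    exact h2
  · -- homomorphism property
    intro β hβ γ hγ
    funext y
    apply Subtype.ext
    have hbe' : ∀ x, ε (α (β x)) = β x := fun x => congrFun hβ.2.2 x
    simp only [hΦ, vmul, Function.comp_apply]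
    rw [hbe']
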